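/- arXiv:2205.08080 — 5 statements merged into one kernel-verified Lean document; each statement's English description precedes it below -/
import Mathlib

section
/- Let R be a commutative ring and let α, β, α', β' ∈ R. Then in the formal power series ring R[[X]] one has the identity (∑_{n≥0} h_n(α,β)·h_n(α',β')·X^n) · (1 − αα'X) · (1 − αβ'X) · (1 − βα'X) · (1 − ββ'X) = 1 − αβα'β'·X². -/
open PowerSeries

/-- `h n α β = ∑_{i=0}^{n} α^i β^(n-i)`. -/
def hSym {R : Type*} [CommRing R] (n : ℕ) (α β : R) : R :=
  ∑ i ∈ Finset.range (n + 1), α ^ i * β ^ (n - i)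

lemma hSym_map {R S : Type*} [CommRing R] [CommRing S] (φ : R →+* S) (n : ℕ) (a b : R) :
    φ (hSym n a b) = hSym n (φ a) (φ b) := by
  simp [hSym, map_sum]

lemma hSym_mul_sub {R : Type*} [CommRing R] (a b : R) (n : ℕ) :
    hSym n a b * (a - b) = a ^ (n + 1) - b ^ (n + 1) := by
  simpa [hSym] using geom_sum₂_mul a b (n + 1)

lemma geom_mk {R : Type*} [CommRing R] (c : R) :
    (PowerSeries.mk fun n => c ^ n) * (1 - C c * X) = 1 := by
  have h : (PowerSeries.mk fun n => c ^ n) * (1 - C c * X)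
      = (PowerSeries.mk fun n => c ^ n) - C c * ((PowerSeries.mk fun n => c ^ n) * X) := by ring
  rw [h]
  ext n
  cases n with
  | zero => simp
  | succ n => simp [coeff_succ_mul_X, pow_succ, mul_comm, coeff_one]

lemma mk_decomp {R : Type*} [CommRing R] (a b a' b' : R) :
    PowerSeries.C ((a - b) * (a' - b')) * (PowerSeries.mk fun n => hSym n a b * hSym n a' b')
      = C (a * a') * (PowerSeries.mk fun n => (a * a') ^ n)
        - C (a * b') * (PowerSeries.mk fun n => (a * b') ^ n)
        - C (b * a') * (PowerSeries.mk fun n => (b * a') ^ n)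
        + C (b * b') * (PowerSeries.mk fun n => (b * b') ^ n) := by
  ext n
  have h1 := hSym_mul_sub a b n
  have h2 := hSym_mul_sub a' b' n
  simp only [map_add, map_sub, coeff_C_mul, coeff_mk]
  have key : (a - b) * (a' - b') * (hSym n a b * hSym n a' b')
      = (hSym n a b * (a - b)) * (hSym n a' b' * (a' - b')) := by ring
  rw [key, h1, h2]
  ring

theorem key_identity {R : Type*} [CommRing R] (α β α' β' : R) :
    PowerSeries.C ((α - β) * (α' - β')) *
      ((PowerSeries.mk fun n => hSym n α β * hSym n α' β') *
        (1 - PowerSeries.C (α * α') * PowerSeries.X) *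
        (1 - PowerSeries.C (α * β') * PowerSeries.X) *
        (1 - PowerSeries.C (β * α') * PowerSeries.X) *
        (1 - PowerSeries.C (β * β') * PowerSeries.X)) =
      PowerSeries.C ((α - β) * (α' - β')) *
        (1 - PowerSeries.C (α * β * α' * β') * PowerSeries.X ^ 2) := by
  have hd := mk_decomp α β α' β'
  have g1 := geom_mk (R := R) (α * α')
  have g2 := geom_mk (R := R) (α * β')
  have g3 := geom_mk (R := R) (β * α')
  have g4 := geom_mk (R := R) (β * β')
  have lhs : PowerSeries.C ((α - β) * (α' - β')) *
      ((PowerSeries.mk fun n => hSym n α β * hSym n α' β') *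
        (1 - PowerSeries.C (α * α') * PowerSeries.X) *
        (1 - PowerSeries.C (α * β') * PowerSeries.X) *
        (1 - PowerSeries.C (β * α') * PowerSeries.X) *
        (1 - PowerSeries.C (β * β') * PowerSeries.X))
      = (PowerSeries.C ((α - β) * (α' - β')) *
          (PowerSeries.mk fun n => hSym n α β * hSym n α' β')) *
        (1 - PowerSeries.C (α * α') * PowerSeries.X) *
        (1 - PowerSeries.C (α * β') * PowerSeries.X) *
        (1 - PowerSeries.C (β * α') * PowerSeries.X) *
        (1 - PowerSeries.C (β * β') * PowerSeries.X) := by ring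
  rw [lhs, hd]
  simp only [map_mul, map_sub] at g1 g2 g3 g4 ⊢
  linear_combination
    (PowerSeries.C α * PowerSeries.C α' *
      (1 - PowerSeries.C α * PowerSeries.C β' * PowerSeries.X) *
      (1 - PowerSeries.C β * PowerSeries.C α' * PowerSeries.X) *
      (1 - PowerSeries.C β * PowerSeries.C β' * PowerSeries.X)) * g1 -
    (PowerSeries.C α * PowerSeries.C β' *
      (1 - PowerSeries.C α * PowerSeries.C α' * PowerSeries.X) *
      (1 - PowerSeries.C β * PowerSeries.C α' * PowerSeries.X) *
      (1 - PowerSeries.C β * PowerSeries.C β' * PowerSeries.X)) * g2 -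
    (PowerSeries.C β * PowerSeries.C α' *
      (1 - PowerSeries.C α * PowerSeries.C α' * PowerSeries.X) *
      (1 - PowerSeries.C α * PowerSeries.C β' * PowerSeries.X) *
      (1 - PowerSeries.C β * PowerSeries.C β' * PowerSeries.X)) * g3 +
    (PowerSeries.C β * PowerSeries.C β' *
      (1 - PowerSeries.C α * PowerSeries.C α' * PowerSeries.X) *
      (1 - PowerSeries.C α * PowerSeries.C β' * PowerSeries.X) *
      (1 - PowerSeries.C β * PowerSeries.C α' * PowerSeries.X)) * g4

lemma map_mk {R S : Type*} [CommRing R] [CommRing S] (φ : R →+* S) (f : ℕ → R) :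
    PowerSeries.map φ (PowerSeries.mk f) = PowerSeries.mk fun n => φ (f n) := by
  ext n
  simp [PowerSeries.coeff_map]

theorem stmt_generic :
    letI R := MvPolynomial (Fin 4) ℤ
    (PowerSeries.mk fun n =>
        hSym n (MvPolynomial.X 0) (MvPolynomial.X 1) *
          hSym n (MvPolynomial.X 2) (MvPolynomial.X 3)) *
        (1 - PowerSeries.C (R := R) (MvPolynomial.X 0 * MvPolynomial.X 2) * PowerSeries.X) *
        (1 - PowerSeries.C (R := R) (MvPolynomial.X 0 * MvPolynomial.X 3) * PowerSeries.X) *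
        (1 - PowerSeries.C (R := R) (MvPolynomial.X 1 * MvPolynomial.X 2) * PowerSeries.X) *
        (1 - PowerSeries.C (R := R) (MvPolynomial.X 1 * MvPolynomial.X 3) * PowerSeries.X) =
      1 - PowerSeries.C (R := R) (MvPolynomial.X 0 * MvPolynomial.X 1 * MvPolynomial.X 2 *
        MvPolynomial.X 3) * PowerSeries.X ^ 2 := by
  set R := MvPolynomial (Fin 4) ℤ
  have hD : ((MvPolynomial.X 0 - MvPolynomial.X 1) * (MvPolynomial.X 2 - MvPolynomial.X 3) : R)
      ≠ 0 := by
    intro h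
    have := congrArg (MvPolynomial.eval (![1, 0, 1, 0] : Fin 4 → ℤ)) h
    simp at this
  have hC : (PowerSeries.C (R := R) ((MvPolynomial.X 0 - MvPolynomial.X 1) *
      (MvPolynomial.X 2 - MvPolynomial.X 3))) ≠ 0 := by
    intro h
    apply hD
    have := congrArg (PowerSeries.constantCoeff (R := R)) h
    simpa using this
  exact mul_left_cancel₀ hC
    (key_identity (MvPolynomial.X 0) (MvPolynomial.X 1) (MvPolynomial.X 2) (MvPolynomial.X 3))

/-- The local Rankin–Selberg Euler factor identity in `R[[X]]`:
`(∑ h_n(α,β)h_n(α',β') X^n)(1-αα'X)(1-αβ'X)(1-βα'X)(1-ββ'X) = 1 - αβα'β'X²`. -/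
theorem stmt_0 {R : Type*} [CommRing R] (α β α' β' : R) :
    (PowerSeries.mk fun n => hSym n α β * hSym n α' β') *
        (1 - PowerSeries.C (α * α') * PowerSeries.X) *
        (1 - PowerSeries.C (α * β') * PowerSeries.X) *
        (1 - PowerSeries.C (β * α') * PowerSeries.X) *
        (1 - PowerSeries.C (β * β') * PowerSeries.X) =
      1 - PowerSeries.C (α * β * α' * β') * PowerSeries.X ^ 2 := by
  have h := stmt_generic
  set σ : MvPolynomial (Fin 4) ℤ →+* R :=
    (MvPolynomial.eval₂Hom (Int.castRingHom R) ![α, β, α', β']) with hσ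
  have := congrArg (PowerSeries.map σ) h
  simpa [map_mk, hSym_map, PowerSeries.map_C, PowerSeries.map_X, map_mul, map_sub, map_one,
    map_pow, hσ, Matrix.cons_val_zero, Matrix.cons_val_one, Matrix.head_cons,
    Matrix.cons_val_fin_one] using this
end

section
/- Let p be a prime and let L be a complete normed field whose norm satisfies the ultrametric inequality and which is a normed ℚ_p-algebra. Let f ∈ ℤ_p[[X]] be a nonzero power series. Write f = p^μ · g where μ ≥ 0 and g ∈ ℤ_p[[X]] has at least one coefficient that is a unit of ℤ_p, and let d be the least index n such that the n-th coefficient of g is a unit. Then the set { x ∈ L : ‖x‖ < 1 and f(x) = 0 } has at most d elements; in particular a nonzero power series in ℤ_p[[X]] has only finitely many zeros in the open unit ball of L. -/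
open Filter

section Strassmann

variable {L : Type*} [NormedField L] [CompleteSpace L] [IsUltrametricDist L]

/-- Power series with coefficients in the closed unit ball converge on the open unit ball. -/
lemma aux_summable (u : ℕ → L) (hu : ∀ n, ‖u n‖ ≤ 1) {x : L} (hx : ‖x‖ < 1) :
    Summable (fun n => u n * x ^ n) := by
  apply NonarchimedeanAddGroup.summable_of_tendsto_cofinite_zero
  rw [Nat.cofinite_eq_atTop]
  apply squeeze_zero_norm (fun n => ?_)
    (tendsto_pow_atTop_nhds_zero_of_lt_one (norm_nonneg x) hx)
  rw [norm_mul, norm_pow]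
  exact mul_le_of_le_one_left (pow_nonneg (norm_nonneg x) n) (hu n)

lemma aux_norm_add_eq {h t : L} (hlt : ‖t‖ < ‖h‖) : ‖h + t‖ = ‖h‖ := by
  refine le_antisymm ((IsUltrametricDist.norm_add_le_max h t).trans (max_le le_rfl hlt.le)) ?_
  by_contra H
  push_neg at H
  have h1 : ‖h‖ = ‖(h + t) + (-t)‖ := by rw [add_neg_cancel_right]
  have h2 := IsUltrametricDist.norm_add_le_max (h + t) (-t)
  rw [norm_neg] at h2
  have h3 : max ‖h + t‖ ‖t‖ < ‖h‖ := max_lt H hlt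
  linarith [h1.trans_le h2]

/-- The key factorization: for `‖x‖ < 1`, `‖r‖ < 1`,
`∑ aₙxⁿ - ∑ aₙrⁿ = (x - r) · ∑ᵢ (∑ⱼ a_{i+j+1} rʲ) xⁱ`. -/
lemma aux_key (a : ℕ → L) (ha : ∀ n, ‖a n‖ ≤ 1) {r x : L} (hr : ‖r‖ < 1) (hx : ‖x‖ < 1) :
    (∑' n, a n * x ^ n) - (∑' n, a n * r ^ n)
      = (x - r) * ∑' i, (∑' j, a (i + j + 1) * r ^ j) * x ^ i := by
  set t : ℝ := max ‖x‖ ‖r‖ with ht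
  have ht1 : t < 1 := max_lt hx hr
  have ht0 : (0:ℝ) ≤ t := le_trans (norm_nonneg x) (le_max_left _ _)
  set c : ℕ × ℕ → L := fun p => a (p.1 + p.2 + 1) * x ^ p.1 * r ^ p.2 with hc_def
  have hcb : ∀ p : ℕ × ℕ, ‖c p‖ ≤ t ^ p.1 * t ^ p.2 := by
    intro p
    have : ‖c p‖ = ‖a (p.1 + p.2 + 1)‖ * ‖x‖ ^ p.1 * ‖r‖ ^ p.2 := by
      simp [hc_def, norm_mul, norm_pow]
    rw [this]
    calc ‖a (p.1 + p.2 + 1)‖ * ‖x‖ ^ p.1 * ‖r‖ ^ p.2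
        ≤ 1 * t ^ p.1 * t ^ p.2 := by
          gcongr
          · exact ha _
          · exact le_max_left _ _
          · exact le_max_right _ _
      _ = t ^ p.1 * t ^ p.2 := by ring
  have hc : Summable c := by
    refine Summable.of_norm_bounded ?_ hcb
    exact (summable_geometric_of_lt_one ht0 ht1).mul_of_nonneg
      (summable_geometric_of_lt_one ht0 ht1)
      (fun n => pow_nonneg ht0 n) (fun n => pow_nonneg ht0 n)
  -- the indicator version on (n, i)
  set C : ℕ × ℕ → L := fun q => if q.2 < q.1 then a q.1 * x ^ q.2 * r ^ (q.1 - 1 - q.2) else 0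
    with hC_def
  set G : ℕ × ℕ → ℕ × ℕ := fun p => (p.1 + p.2 + 1, p.1) with hG_def
  have hGinj : Function.Injective G := by
    intro p q h
    simp only [hG_def, Prod.mk.injEq] at h
    obtain ⟨h1, h2⟩ := h
    exact Prod.ext h2 (by omega)
  have hCG : ∀ p : ℕ × ℕ, C (G p) = c p := by
    intro p
    simp only [hC_def, hG_def, hc_def]
    rw [if_pos (by omega)]
    congr 2
    omega
  have hCvan : ∀ q ∉ Set.range G, C q = 0 := by
    intro q hq
    by_cases h : q.2 < q.1
    · exact absurd ⟨(q.2, q.1 - 1 - q.2), by simp only [hG_def]; exact Prod.ext (by omega) rfl⟩ hq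
    · simp [hC_def, h]
  have hCsupp : Function.support C ⊆ Set.range G := by
    intro q hq
    by_contra h
    exact hq (hCvan q h)
  have hCsum : Summable C := by
    rw [← hGinj.summable_iff hCvan]
    exact hc.congr fun p => (hCG p).symm
  have hsx : Summable fun n => a n * x ^ n := aux_summable a ha hx
  have hsr : Summable fun n => a n * r ^ n := aux_summable a ha hr
  calc (∑' n, a n * x ^ n) - (∑' n, a n * r ^ n)
      = ∑' n, (a n * x ^ n - a n * r ^ n) := (Summable.tsum_sub hsx hsr).symm
    _ = ∑' n, (x - r) * ∑ i ∈ Finset.range n, a n * x ^ i * r ^ (n - 1 - i) := by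
        refine tsum_congr fun n => ?_
        rw [← mul_sub, ← geom_sum₂_mul x r n, Finset.sum_mul, Finset.mul_sum, Finset.mul_sum]
        exact Finset.sum_congr rfl fun i _ => by ring
    _ = (x - r) * ∑' n, ∑ i ∈ Finset.range n, a n * x ^ i * r ^ (n - 1 - i) := tsum_mul_left
    _ = (x - r) * ∑' n, ∑' i, C (n, i) := by
        congr 1
        refine tsum_congr fun n => ?_
        rw [tsum_eq_sum (s := Finset.range n) (fun i hi => by
          simp only [hC_def]
          rw [if_neg (by simpa using hi)])]
        refine Finset.sum_congr rfl fun i hi => ?_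
        simp only [hC_def]
        rw [if_pos (Finset.mem_range.mp hi)]
    _ = (x - r) * ∑' q : ℕ × ℕ, C q := by
        rw [Summable.tsum_prod' hCsum hCsum.prod_factor]
    _ = (x - r) * ∑' p : ℕ × ℕ, c p := by
        rw [← hGinj.tsum_eq hCsupp]
        congr 1
        exact tsum_congr hCG
    _ = (x - r) * ∑' i, ∑' j, c (i, j) := by
        rw [Summable.tsum_prod' hc hc.prod_factor]
    _ = (x - r) * ∑' i, (∑' j, a (i + j + 1) * r ^ j) * x ^ i := by
        congr 1
        refine tsum_congr fun i => ?_
        rw [← tsum_mul_right]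
        refine tsum_congr fun j => ?_
        simp only [hc_def]
        ring

/-- Strassmann-type bound over an arbitrary complete ultrametric normed field. -/
theorem aux_strassmann :
    ∀ (d : ℕ) (a : ℕ → L), (∀ n, ‖a n‖ ≤ 1) → ‖a d‖ = 1 → (∀ m < d, ‖a m‖ < 1) →
      {x : L | ‖x‖ < 1 ∧ ∑' n, a n * x ^ n = 0}.Finite ∧
      {x : L | ‖x‖ < 1 ∧ ∑' n, a n * x ^ n = 0}.ncard ≤ d := by
  intro d
  induction d with
  | zero =>
    intro a ha had _
    have hempty : {x : L | ‖x‖ < 1 ∧ ∑' n, a n * x ^ n = 0} = ∅ := by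
      ext x
      simp only [Set.mem_setOf_eq, Set.mem_empty_iff_false, iff_false, not_and]
      intro hx heq
      have hsum := aux_summable a ha hx
      have h0 : (0:L) = a 0 * x ^ 0 + ∑' n, a (n + 1) * x ^ (n + 1) := by
        rw [← heq]; exact Summable.tsum_eq_zero_add hsum
      have hhead : ‖a 0 * x ^ 0‖ = 1 := by simpa using had
      have htail : ‖∑' n, a (n + 1) * x ^ (n + 1)‖ ≤ ‖x‖ := by
        refine IsUltrametricDist.norm_tsum_le_of_forall_le_of_nonneg (norm_nonneg x) fun n => ?_
        rw [norm_mul, norm_pow]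
        calc ‖a (n + 1)‖ * ‖x‖ ^ (n + 1) ≤ 1 * ‖x‖ ^ (n + 1) := by
              gcongr; exact ha _
          _ = ‖x‖ ^ (n + 1) := one_mul _
          _ ≤ ‖x‖ := pow_le_of_le_one (norm_nonneg x) hx.le (Nat.succ_ne_zero n)
      have : a 0 * x ^ 0 = -(∑' n, a (n + 1) * x ^ (n + 1)) :=
        eq_neg_of_add_eq_zero_left h0.symm
      rw [this, norm_neg] at hhead
      linarith [htail.trans_lt hx, hhead.symm.le]
    rw [hempty]
    simp
  | succ e IH =>
    intro a ha had hlt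
    by_cases hne : {x : L | ‖x‖ < 1 ∧ ∑' n, a n * x ^ n = 0}.Nonempty
    · obtain ⟨r, hr1, hr0⟩ := hne
      set b : ℕ → L := fun i => ∑' j, a (i + j + 1) * r ^ j with hb
      have hbsum : ∀ i, Summable fun j => a (i + j + 1) * r ^ j :=
        fun i => aux_summable _ (fun j => ha _) hr1
      have hterm : ∀ i j, ‖a (i + j + 1) * r ^ j‖ ≤ ‖r‖ ^ j := by
        intro i j
        rw [norm_mul, norm_pow]
        exact mul_le_of_le_one_left (pow_nonneg (norm_nonneg r) j) (ha _)
      have hble : ∀ i, ‖b i‖ ≤ 1 := by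
        intro i
        refine IsUltrametricDist.norm_tsum_le_of_forall_le_of_nonneg zero_le_one fun j => ?_
        exact (hterm i j).trans (pow_le_one₀ (norm_nonneg r) hr1.le)
      have hbe : ‖b e‖ = 1 := by
        have h0 : b e = a (e + 0 + 1) * r ^ 0 + ∑' j, a (e + (j + 1) + 1) * r ^ (j + 1) :=
          Summable.tsum_eq_zero_add (hbsum e)
        have hhead : ‖a (e + 0 + 1) * r ^ 0‖ = 1 := by simpa using had
        have htail : ‖∑' j, a (e + (j + 1) + 1) * r ^ (j + 1)‖ ≤ ‖r‖ := by
          refine IsUltrametricDist.norm_tsum_le_of_forall_le_of_nonneg (norm_nonneg r) fun j => ?_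
          rw [norm_mul, norm_pow]
          calc ‖a (e + (j + 1) + 1)‖ * ‖r‖ ^ (j + 1) ≤ 1 * ‖r‖ ^ (j + 1) := by
                gcongr; exact ha _
            _ = ‖r‖ ^ (j + 1) := one_mul _
            _ ≤ ‖r‖ := pow_le_of_le_one (norm_nonneg r) hr1.le (Nat.succ_ne_zero j)
        rw [h0, aux_norm_add_eq (by rw [hhead]; exact htail.trans_lt hr1), hhead]
      have hblt : ∀ m < e, ‖b m‖ < 1 := by
        intro m hm
        set D : ℝ := max ‖r‖ ((Finset.range (e + 1)).sup' ⟨0, by simp⟩ fun k => ‖a k‖) with hD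
        have hD1 : D < 1 := by
          refine max_lt hr1 ((Finset.sup'_lt_iff _).mpr fun k hk => hlt k ?_)
          simpa using Finset.mem_range.mp hk
        refine lt_of_le_of_lt ?_ hD1
        refine IsUltrametricDist.norm_tsum_le_of_forall_le_of_nonneg
          (le_trans (norm_nonneg r) (le_max_left _ _)) fun j => ?_
        by_cases hj : m + j + 1 < e + 1
        · calc ‖a (m + j + 1) * r ^ j‖ ≤ ‖a (m + j + 1)‖ * 1 := by
                rw [norm_mul, norm_pow]
                gcongr
                exact pow_le_one₀ (norm_nonneg r) hr1.le
            _ = ‖a (m + j + 1)‖ := mul_one _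
            _ ≤ (Finset.range (e + 1)).sup' ⟨0, by simp⟩ fun k => ‖a k‖ :=
                Finset.le_sup' (fun k => ‖a k‖) (Finset.mem_range.mpr hj)
            _ ≤ D := le_max_right _ _
        · have hj1 : j ≠ 0 := by omega
          calc ‖a (m + j + 1) * r ^ j‖ ≤ ‖r‖ ^ j := hterm m j
            _ ≤ ‖r‖ := pow_le_of_le_one (norm_nonneg r) hr1.le hj1
            _ ≤ D := le_max_left _ _
      have hfact : ∀ x : L, ‖x‖ < 1 → ∑' n, a n * x ^ n = (x - r) * ∑' i, b i * x ^ i := by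
        intro x hx
        have h := aux_key a ha hr1 hx
        rw [hr0, sub_zero] at h
        exact h
      have hsub : {x : L | ‖x‖ < 1 ∧ ∑' n, a n * x ^ n = 0}
          ⊆ insert r {x : L | ‖x‖ < 1 ∧ ∑' n, b n * x ^ n = 0} := by
        rintro x ⟨hx1, hx0⟩
        rw [hfact x hx1] at hx0
        rcases mul_eq_zero.mp hx0 with h | h
        · left; exact sub_eq_zero.mp h
        · right; exact ⟨hx1, h⟩
      obtain ⟨hfin, hcard⟩ := IH b hble hbe hblt
      refine ⟨(hfin.insert r).subset hsub, ?_⟩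
      calc {x : L | ‖x‖ < 1 ∧ ∑' n, a n * x ^ n = 0}.ncard
          ≤ (insert r {x : L | ‖x‖ < 1 ∧ ∑' n, b n * x ^ n = 0}).ncard :=
            Set.ncard_le_ncard hsub (hfin.insert r)
        _ ≤ {x : L | ‖x‖ < 1 ∧ ∑' n, b n * x ^ n = 0}.ncard + 1 := Set.ncard_insert_le _ _
        _ ≤ e + 1 := by omega
    · rw [Set.not_nonempty_iff_eq_empty] at hne
      rw [hne]
      simp

end Strassmann

/-- Evaluation of a power series `f ∈ ℤ_p[[X]]` at a point `x` of a normed `ℚ_p`-algebra `L`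
(intended for `‖x‖ < 1`): `f(x) = ∑_{n≥0} (coeff_n f)·x^n`. -/
noncomputable def padicEval (p : ℕ) [Fact p.Prime] (L : Type*) [NormedField L]
    [NormedAlgebra ℚ_[p] L] (f : PowerSeries ℤ_[p]) (x : L) : L :=
  ∑' n : ℕ, algebraMap ℚ_[p] L ((PowerSeries.coeff (R := ℤ_[p]) n f : ℚ_[p])) * x ^ n

/-- A nonzero power series `f = p^μ·g ∈ ℤ_p[[X]]`, where `g` has Weierstrass degree `d`
(least index of a unit coefficient), has at most `d` zeros in the open unit ball of a
complete ultrametric normed `ℚ_p`-algebra field `L`; in particular finitely many. -/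
theorem stmt_5 (p : ℕ) [Fact p.Prime] (L : Type*) [NormedField L] [CompleteSpace L]
    [NormedAlgebra ℚ_[p] L]
    (h_ultra : ∀ x y : L, ‖x + y‖ ≤ max ‖x‖ ‖y‖)
    (f g : PowerSeries ℤ_[p]) (hf : f ≠ 0) (μ : ℕ)
    (hfg : f = PowerSeries.C (R := ℤ_[p]) ((p : ℤ_[p]) ^ μ) * g)
    (d : ℕ) (hd : IsUnit (PowerSeries.coeff (R := ℤ_[p]) d g))
    (hdmin : ∀ m < d, ¬ IsUnit (PowerSeries.coeff (R := ℤ_[p]) m g)) :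
    {x : L | ‖x‖ < 1 ∧ padicEval p L f x = 0}.Finite ∧
      {x : L | ‖x‖ < 1 ∧ padicEval p L f x = 0}.ncard ≤ d := by
  have : IsUltrametricDist L :=
    IsUltrametricDist.isUltrametricDist_of_forall_norm_add_le_max_norm h_ultra
  set a : ℕ → L := fun n => algebraMap ℚ_[p] L ((PowerSeries.coeff (R := ℤ_[p]) n g : ℚ_[p])) with ha_def
  have hnorm : ∀ n, ‖a n‖ = ‖PowerSeries.coeff (R := ℤ_[p]) n g‖ := by
    intro n
    rw [ha_def]
    rw [norm_algebraMap']
    exact PadicInt.padic_norm_e_of_padicInt _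
  have ha : ∀ n, ‖a n‖ ≤ 1 := fun n => (hnorm n).le.trans (PadicInt.norm_le_one _)
  have had : ‖a d‖ = 1 := by rw [hnorm]; exact PadicInt.isUnit_iff.mp hd
  have hlt : ∀ m < d, ‖a m‖ < 1 := by
    intro m hm
    rw [hnorm]
    exact PadicInt.not_isUnit_iff.mp (hdmin m hm)
  -- the zero set of f equals the zero set of g
  have hcne : (algebraMap ℚ_[p] L (((p : ℤ_[p]) ^ μ : ℤ_[p]) : ℚ_[p])) ≠ 0 := by
    rw [map_ne_zero_iff _ (algebraMap ℚ_[p] L).injective]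
    have hcast : (((p : ℤ_[p]) ^ μ : ℤ_[p]) : ℚ_[p]) = (p : ℚ_[p]) ^ μ := by push_cast; ring
    rw [hcast]
    exact pow_ne_zero μ (Nat.cast_ne_zero.mpr (Fact.out : p.Prime).ne_zero)
  have hset : {x : L | ‖x‖ < 1 ∧ padicEval p L f x = 0}
      = {x : L | ‖x‖ < 1 ∧ ∑' n, a n * x ^ n = 0} := by
    ext x
    simp only [Set.mem_setOf_eq, and_congr_right_iff]
    intro hx
    have heval : padicEval p L f x
        = algebraMap ℚ_[p] L (((p : ℤ_[p]) ^ μ : ℤ_[p]) : ℚ_[p]) * ∑' n, a n * x ^ n := by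
      rw [padicEval, ← tsum_mul_left]
      refine tsum_congr fun n => ?_
      simp only [hfg, PowerSeries.coeff_C_mul, PadicInt.coe_mul, map_mul, mul_assoc, ha_def]
    rw [heval, mul_eq_zero]
    constructor
    · rintro (h | h)
      · exact absurd h hcne
      · exact h
    · exact fun h => Or.inr h
  rw [hset]
  exact aux_strassmann d a ha had hlt
end

section
/- Let p be a prime and let L be a complete normed field whose norm satisfies the ultrametric inequality and which is a normed ℚ_p-algebra. Let f ∈ ℤ_p[[X]]. Suppose there exist infinitely many integers k ≥ 1 such that L contains a primitive p^k-th root of unity ζ_k with f(ζ_k − 1) = 0 (this value is defined since ‖ζ_k − 1‖ < 1). Then f = 0. -/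
open Finset Polynomial

section Aux

lemma padicProof_norm_p_inv (p : ℕ) [Fact p.Prime] {L : Type*} [NormedField L]
    [NormedAlgebra ℚ_[p] L] : ‖(p : L)‖ = ((p : ℝ))⁻¹ := by
  rw [← map_natCast (algebraMap ℚ_[p] L), norm_algebraMap', Padic.norm_p]

lemma padicProof_norm_natCast_le_one (p : ℕ) [Fact p.Prime] (L : Type*) [NormedField L]
    [NormedAlgebra ℚ_[p] L] (n : ℕ) : ‖(n : L)‖ ≤ 1 := by
  rw [← map_natCast (algebraMap ℚ_[p] L) n, norm_algebraMap']
  have := Padic.norm_int_le_one (p := p) (n : ℤ)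
  rwa [Int.cast_natCast] at this

lemma padicProof_norm_root_eq_one {p : ℕ} {L : Type*} [NormedField L] {ζ : L} {k : ℕ}
    (hp : p ^ k ≠ 0) (h : IsPrimitiveRoot ζ (p ^ k)) : ‖ζ‖ = 1 := by
  have h1 : ‖ζ‖ ^ (p ^ k) = 1 := by rw [← norm_pow, h.pow_eq_one, norm_one]
  rcases (pow_eq_one_iff_cases).mp h1 with h' | h' | h'
  · exact absurd h' hp
  · exact h'
  · nlinarith [norm_nonneg ζ, h'.1]

lemma padicProof_norm_one_sub_pow_le {L : Type*} [NormedField L] [IsUltrametricDist L] {ζ : L}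
    (hζ : ‖ζ‖ = 1) (j : ℕ) : ‖1 - ζ ^ j‖ ≤ ‖ζ - 1‖ := by
  have hgeom := geom_sum_mul ζ j
  have h1 : ‖1 - ζ ^ j‖ = ‖(∑ i ∈ range j, ζ ^ i) * (ζ - 1)‖ := by
    rw [hgeom, norm_sub_rev]
  rw [h1, norm_mul]
  have hb : ‖∑ i ∈ range j, ζ ^ i‖ ≤ 1 :=
    IsUltrametricDist.norm_sum_le_of_forall_le_of_nonneg zero_le_one
      (fun i _ => by rw [norm_pow, hζ, one_pow])
  calc ‖∑ i ∈ range j, ζ ^ i‖ * ‖ζ - 1‖ ≤ 1 * ‖ζ - 1‖ :=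
        mul_le_mul_of_nonneg_right hb (norm_nonneg _)
    _ = ‖ζ - 1‖ := one_mul _

lemma padicProof_prod_one_sub_roots {L : Type*} [Field L] [DecidableEq L] {ζ : L} {n : ℕ}
    (hn : 0 < n) (h : IsPrimitiveRoot ζ n) :
    (n : L) = ∏ μ ∈ (nthRootsFinset n (1 : L)).erase 1, (1 - μ) := by
  have h1 : (1 : L) ∈ nthRootsFinset n (1 : L) := one_mem_nthRootsFinset hn
  have key : (∑ i ∈ range n, (X : L[X]) ^ i) * (X - 1) =
      (∏ μ ∈ (nthRootsFinset n (1 : L)).erase 1, (X - C μ)) * (X - 1) := by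
    rw [geom_sum_mul, X_pow_sub_one_eq_prod hn h, ← Finset.mul_prod_erase _ _ h1]
    rw [map_one]
    ring
  have h2 : (∑ i ∈ range n, (X : L[X]) ^ i) =
      ∏ μ ∈ (nthRootsFinset n (1 : L)).erase 1, (X - C μ) :=
    mul_right_cancel₀ (X_sub_C_ne_zero 1) (by simpa using key)
  have h3 := congrArg (Polynomial.eval (1 : L)) h2
  simpa [eval_geom_sum, eval_prod] using h3

lemma padicProof_root_norm_lower (p : ℕ) [Fact p.Prime] {L : Type*} [NormedField L]
    [NormedAlgebra ℚ_[p] L] [IsUltrametricDist L] {ζ : L} {k : ℕ}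
    (h : IsPrimitiveRoot ζ (p ^ k)) :
    ((p : ℝ))⁻¹ ^ k ≤ ‖ζ - 1‖ ^ (p ^ k - 1) := by
  classical
  have hn : 0 < p ^ k := pow_pos (Fact.out : p.Prime).pos k
  have hζ1 : ‖ζ‖ = 1 := padicProof_norm_root_eq_one hn.ne' h
  have hnorm : ‖((p ^ k : ℕ) : L)‖ = ((p : ℝ))⁻¹ ^ k := by
    rw [← map_natCast (algebraMap ℚ_[p] L), norm_algebraMap']
    push_cast
    rw [norm_pow, Padic.norm_p]
  rw [← hnorm, padicProof_prod_one_sub_roots hn h, norm_prod]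
  have hcard : ((Polynomial.nthRootsFinset (p ^ k) (1 : L)).erase 1).card = p ^ k - 1 := by
    rw [Finset.card_erase_of_mem (Polynomial.one_mem_nthRootsFinset hn),
      h.card_nthRootsFinset]
  calc ∏ μ ∈ (Polynomial.nthRootsFinset (p ^ k) (1 : L)).erase 1, ‖1 - μ‖
      ≤ ∏ _μ ∈ (Polynomial.nthRootsFinset (p ^ k) (1 : L)).erase 1, ‖ζ - 1‖ := by
        refine Finset.prod_le_prod (fun μ _ => norm_nonneg _) (fun μ hμ => ?_)
        have hμ' := (Polynomial.mem_nthRootsFinset hn 1).mp (Finset.mem_of_mem_erase hμ)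
        haveI : NeZero (p ^ k) := ⟨hn.ne'⟩
        obtain ⟨i, -, rfl⟩ := h.eq_pow_of_pow_eq_one hμ'
        exact padicProof_norm_one_sub_pow_le hζ1 i
    _ = ‖ζ - 1‖ ^ (p ^ k - 1) := by rw [Finset.prod_const, hcard]

lemma padicProof_norm_choose_le (p : ℕ) [Fact p.Prime] {L : Type*} [NormedField L]
    [NormedAlgebra ℚ_[p] L] {k i : ℕ} (hi : i ≠ 0) (hin : i ≠ p ^ k) :
    ‖((p ^ k).choose i : L)‖ ≤ ((p : ℝ))⁻¹ := by
  obtain ⟨d, hd⟩ := (Fact.out : p.Prime).dvd_choose_pow hi hin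
  rw [hd]
  push_cast
  rw [norm_mul, padicProof_norm_p_inv p]
  calc ((p:ℝ))⁻¹ * ‖(d : L)‖ ≤ ((p:ℝ))⁻¹ * 1 :=
        mul_le_mul_of_nonneg_left (padicProof_norm_natCast_le_one p L d) (by positivity)
    _ = ((p:ℝ))⁻¹ := mul_one _

lemma padicProof_root_norm_lt_one (p : ℕ) [Fact p.Prime] {L : Type*} [NormedField L]
    [NormedAlgebra ℚ_[p] L] [IsUltrametricDist L] {ζ : L} {k : ℕ} (hk : 1 ≤ k)
    (h : IsPrimitiveRoot ζ (p ^ k)) : ‖ζ - 1‖ < 1 := by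
  by_contra hge
  push_neg at hge
  set x := ζ - 1 with hx
  have hp1 : 1 < (p : ℝ) := by exact_mod_cast (Fact.out : p.Prime).one_lt
  have hn2 : 2 ≤ p ^ k := by
    calc 2 ≤ p := (Fact.out : p.Prime).two_le
      _ = p ^ 1 := (pow_one p).symm
      _ ≤ p ^ k := Nat.pow_le_pow_right (Fact.out : p.Prime).pos hk
  obtain ⟨m, hm⟩ : ∃ m, p ^ k = m + 1 := ⟨p ^ k - 1, by omega⟩
  have hζx : ζ = x + 1 := by ring
  have hpow : ∑ i ∈ range (p ^ k + 1), x ^ i * ((p ^ k).choose i : L) = 1 := by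
    have hb := add_pow x (1 : L) (p ^ k)
    simp only [one_pow, mul_one] at hb
    rw [← hb, ← hζx, h.pow_eq_one]
  have h0 : ∑ i ∈ range (p ^ k), x ^ (i + 1) * ((p ^ k).choose (i + 1) : L) = 0 := by
    have h' := Finset.sum_range_succ' (fun i => x ^ i * ((p ^ k).choose i : L)) (p ^ k)
    rw [hpow] at h'
    simp only [pow_zero, Nat.choose_zero_right, Nat.cast_one, one_mul] at h'
    linear_combination -h'
  rw [hm, Finset.sum_range_succ, Nat.choose_self, Nat.cast_one, mul_one] at h0
  have hxn : x ^ (m + 1) = - ∑ i ∈ range m, x ^ (i + 1) * (((m + 1)).choose (i + 1) : L) := by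
    linear_combination h0
  have hbound : ‖x ^ (m + 1)‖ ≤ ((p : ℝ))⁻¹ * ‖x‖ ^ m := by
    rw [hxn, norm_neg]
    refine IsUltrametricDist.norm_sum_le_of_forall_le_of_nonneg (by positivity) ?_
    intro i hi
    rw [Finset.mem_range] at hi
    rw [norm_mul, norm_pow]
    have h1 : ‖x‖ ^ (i + 1) ≤ ‖x‖ ^ m := pow_le_pow_right₀ hge (by omega)
    have h2 : ‖((m + 1).choose (i + 1) : L)‖ ≤ ((p : ℝ))⁻¹ := by
      rw [← hm]; exact padicProof_norm_choose_le p (by omega) (by omega)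
    calc ‖x‖ ^ (i + 1) * ‖((m + 1).choose (i + 1) : L)‖
        ≤ ‖x‖ ^ m * ((p : ℝ))⁻¹ :=
          mul_le_mul h1 h2 (norm_nonneg _) (by positivity)
      _ = ((p : ℝ))⁻¹ * ‖x‖ ^ m := mul_comm _ _
  rw [norm_pow, pow_succ] at hbound
  have hxm : (0:ℝ) < ‖x‖ ^ m := by positivity
  have hle : ‖x‖ ≤ ((p : ℝ))⁻¹ :=
    le_of_mul_le_mul_right (by rw [mul_comm]; exact hbound) hxm
  have hlt : ((p:ℝ))⁻¹ < 1 := by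
    rw [inv_lt_one_iff₀]; right; exact hp1
  linarith

lemma padicProof_padic_norm_le_of_le_val {p : ℕ} [Fact p.Prime] {a : ℤ_[p]} {m : ℕ}
    (h : (m : ℤ) ≤ a.valuation) : ‖a‖ ≤ ((p : ℝ))⁻¹ ^ m := by
  have hp1 : 1 < (p : ℝ) := by exact_mod_cast (Fact.out : p.Prime).one_lt
  rcases eq_or_ne a 0 with rfl | ha
  · rw [norm_zero]; positivity
  · rw [PadicInt.norm_eq_zpow_neg_valuation ha]
    calc (p : ℝ) ^ (-(a.valuation : ℤ)) ≤ (p : ℝ) ^ (-(m : ℤ)) :=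
          zpow_le_zpow_right₀ hp1.le (by omega)
      _ = ((p : ℝ))⁻¹ ^ m := by rw [zpow_neg, ← inv_zpow, zpow_natCast]

lemma padicProof_padic_norm_eq_of_val {p : ℕ} [Fact p.Prime] {a : ℤ_[p]} {m : ℕ}
    (ha : a ≠ 0) (h : a.valuation = (m : ℤ)) : ‖a‖ = ((p : ℝ))⁻¹ ^ m := by
  rw [PadicInt.norm_eq_zpow_neg_valuation ha, h, zpow_neg, ← inv_zpow, zpow_natCast]

lemma padicProof_growth (c : ℕ) : ∀ k, 2 * (c + 2) + 1 ≤ k → k * c + 2 ≤ 2 ^ k := by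
  intro k hk
  have h1 : k * c + 2 ≤ k * (c + 2) := by nlinarith
  have h2 : k * (c + 2) ≤ k.choose 2 := by
    rw [Nat.choose_two_right]
    calc k * (c + 2) = k * (2 * (c + 2)) / 2 := by
          rw [show k * (2 * (c + 2)) = k * (c + 2) * 2 by ring, Nat.mul_div_cancel _ two_pos]
      _ ≤ k * (k - 1) / 2 := Nat.div_le_div_right (Nat.mul_le_mul_left _ (by omega))
  have h3 : k.choose 2 ≤ 2 ^ k := by
    calc k.choose 2 ≤ ∑ i ∈ range (k + 1), k.choose i :=
          Finset.single_le_sum (fun i _ => Nat.zero_le _) (by simp; omega)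
      _ = 2 ^ k := Nat.sum_range_choose k
  omega

end Aux

/-- If `f ∈ ℤ_p[[X]]` vanishes at `ζ - 1` for primitive `p^k`-th roots of unity `ζ ∈ L` for
infinitely many `k ≥ 1`, then `f = 0`. -/
theorem stmt_6 (p : ℕ) [Fact p.Prime] (L : Type*) [NormedField L] [CompleteSpace L]
    [NormedAlgebra ℚ_[p] L]
    (h_ultra : ∀ x y : L, ‖x + y‖ ≤ max ‖x‖ ‖y‖)
    (f : PowerSeries ℤ_[p])
    (h : {k : ℕ | 1 ≤ k ∧
      ∃ ζ : L, IsPrimitiveRoot ζ (p ^ k) ∧ padicEval p L f (ζ - 1) = 0}.Infinite) :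
    f = 0 := by
  haveI : IsUltrametricDist L :=
    IsUltrametricDist.isUltrametricDist_of_forall_norm_add_le_max_norm h_ultra
  by_contra hf
  classical
  have hp1 : 1 < (p : ℝ) := by exact_mod_cast (Fact.out : p.Prime).one_lt
  have hpinv0 : (0:ℝ) < ((p:ℝ))⁻¹ := by positivity
  have hpinv1 : ((p:ℝ))⁻¹ < 1 := by rw [inv_lt_one_iff₀]; right; exact hp1
  -- find minimal valuation m and first index N achieving it
  obtain ⟨n₀, hn₀⟩ : ∃ n, PowerSeries.coeff (R := ℤ_[p]) n f ≠ 0 := by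
    by_contra hc
    push_neg at hc
    exact hf (PowerSeries.ext fun n => by rw [hc n, map_zero])
  have hSm : ∃ m : ℕ, ∃ n, PowerSeries.coeff (R := ℤ_[p]) n f ≠ 0 ∧
      (PowerSeries.coeff (R := ℤ_[p]) n f).valuation = (m : ℤ) :=
    ⟨(PowerSeries.coeff (R := ℤ_[p]) n₀ f).valuation, n₀, hn₀,
      rfl⟩
  set m := Nat.find hSm with hm_def
  have hNex := Nat.find_spec hSm
  set N := Nat.find hNex with hN_def
  obtain ⟨hcN, hvN⟩ := Nat.find_spec hNex
  -- the three coefficient norm facts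
  have hval_ge : ∀ n, PowerSeries.coeff (R := ℤ_[p]) n f ≠ 0 →
      (m : ℤ) ≤ (PowerSeries.coeff (R := ℤ_[p]) n f).valuation := by
    intro n hn
    have h1 : m ≤ (PowerSeries.coeff (R := ℤ_[p]) n f).valuation :=
      Nat.find_le ⟨n, hn, rfl⟩
    have h2 := Nat.zero_le (PadicInt.valuation (PowerSeries.coeff (R := ℤ_[p]) n f))
    omega
  have hFN : ‖PowerSeries.coeff (R := ℤ_[p]) N f‖ = ((p:ℝ))⁻¹ ^ m :=
    padicProof_padic_norm_eq_of_val hcN hvN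
  have hFall : ∀ n, ‖PowerSeries.coeff (R := ℤ_[p]) n f‖ ≤ ((p:ℝ))⁻¹ ^ m := by
    intro n
    rcases eq_or_ne (PowerSeries.coeff (R := ℤ_[p]) n f) 0 with h0 | h0
    · rw [h0, norm_zero]; positivity
    · exact padicProof_padic_norm_le_of_le_val (hval_ge n h0)
  have hFlt : ∀ n < N, ‖PowerSeries.coeff (R := ℤ_[p]) n f‖ ≤ ((p:ℝ))⁻¹ ^ (m + 1) := by
    intro n hn
    rcases eq_or_ne (PowerSeries.coeff (R := ℤ_[p]) n f) 0 with h0 | h0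
    · rw [h0, norm_zero]; positivity
    · refine padicProof_padic_norm_le_of_le_val ?_
      have h1 := hval_ge n h0
      have h2 : ¬(PowerSeries.coeff (R := ℤ_[p]) n f ≠ 0 ∧
          (PowerSeries.coeff (R := ℤ_[p]) n f).valuation = (m : ℤ)) := Nat.find_min hNex hn
      push_neg at h2
      have h3 := h2 h0
      push_cast
      omega
  -- pick a large k in the infinite set
  obtain ⟨k, hk_mem, hk_big⟩ := h.exists_gt (2 * (N + 2) + 1)
  obtain ⟨hk1, ζ, hζ, hζ0⟩ := hk_mem
  have hkN : k * N + 2 ≤ p ^ k := by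
    calc k * N + 2 ≤ 2 ^ k := padicProof_growth N k (by omega)
      _ ≤ p ^ k := Nat.pow_le_pow_left (Fact.out : p.Prime).two_le k
  set x := ζ - 1 with hx_def
  have hx1 : ‖x‖ < 1 := padicProof_root_norm_lt_one p hk1 hζ
  have hx0 : x ≠ 0 := by
    rw [hx_def, sub_ne_zero]
    refine hζ.ne_one ?_
    calc 1 < 2 := one_lt_two
      _ ≤ p ^ k := by
        calc 2 ≤ p := (Fact.out : p.Prime).two_le
          _ = p ^ 1 := (pow_one p).symm
          _ ≤ p ^ k := Nat.pow_le_pow_right (Fact.out : p.Prime).pos hk1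
  have hxpos : 0 < ‖x‖ := norm_pos_iff.mpr hx0
  -- key: ‖x‖ ^ N > 1/p
  have hxN : ((p:ℝ))⁻¹ < ‖x‖ ^ N := by
    by_contra hle
    push_neg at hle
    have hlow := padicProof_root_norm_lower p hζ
    have h1 : (((p:ℝ))⁻¹ ^ k) ^ N ≤ (‖x‖ ^ (p ^ k - 1)) ^ N :=
      pow_le_pow_left₀ (by positivity) hlow N
    have h2 : (‖x‖ ^ (p ^ k - 1)) ^ N = (‖x‖ ^ N) ^ (p ^ k - 1) := by
      rw [← pow_mul, ← pow_mul, Nat.mul_comm]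
    have h3 : (‖x‖ ^ N) ^ (p ^ k - 1) ≤ (((p:ℝ))⁻¹) ^ (p ^ k - 1) :=
      pow_le_pow_left₀ (by positivity) hle _
    have h4 : (((p:ℝ))⁻¹) ^ (k * N) ≤ (((p:ℝ))⁻¹) ^ (p ^ k - 1) := by
      rw [pow_mul]
      calc ((((p:ℝ))⁻¹) ^ k) ^ N ≤ (‖x‖ ^ N) ^ (p ^ k - 1) := h2 ▸ h1
        _ ≤ (((p:ℝ))⁻¹) ^ (p ^ k - 1) := h3
    have h5 : p ^ k - 1 ≤ k * N := by
      by_contra hc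
      push_neg at hc
      exact absurd h4 (not_le.mpr ((pow_lt_pow_iff_right_of_lt_one₀ hpinv0 hpinv1).mpr hc))
    omega
  -- series setup
  set a : ℕ → L := fun n =>
    algebraMap ℚ_[p] L ((PowerSeries.coeff (R := ℤ_[p]) n f : ℚ_[p])) * x ^ n with ha_def
  have hna : ∀ n, ‖a n‖ = ‖PowerSeries.coeff (R := ℤ_[p]) n f‖ * ‖x‖ ^ n := by
    intro n
    rw [ha_def]
    simp only [norm_mul, norm_pow, norm_algebraMap']
    rw [PadicInt.padic_norm_e_of_padicInt]
  have hsum : Summable a := by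
    refine NonarchimedeanAddGroup.summable_of_tendsto_cofinite_zero ?_
    rw [Nat.cofinite_eq_atTop]
    refine squeeze_zero_norm (fun n => ?_) (tendsto_pow_atTop_nhds_zero_of_lt_one
      (norm_nonneg x) hx1)
    rw [hna n]
    calc ‖PowerSeries.coeff (R := ℤ_[p]) n f‖ * ‖x‖ ^ n ≤ 1 * ‖x‖ ^ n := by
          refine mul_le_mul_of_nonneg_right ?_ (by positivity)
          exact (PadicInt.norm_le_one _)
      _ = ‖x‖ ^ n := one_mul _
  have hEval : padicEval p L f x = a N + ∑' n, if n = N then 0 else a n :=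
    Summable.tsum_eq_add_tsum_ite hsum N
  set C : ℝ := max (((p:ℝ))⁻¹ ^ (m + 1)) (((p:ℝ))⁻¹ ^ m * ‖x‖ ^ (N + 1)) with hC_def
  have hC0 : 0 ≤ C := le_trans (by positivity) (le_max_left _ _)
  have hrest : ‖∑' n, if n = N then 0 else a n‖ ≤ C := by
    refine IsUltrametricDist.norm_tsum_le_of_forall_le_of_nonneg hC0 ?_
    intro n
    rcases eq_or_ne n N with rfl | hnN
    · simp [hC0]
    · rw [if_neg hnN, hna n]
      rcases lt_or_gt_of_ne hnN with hlt | hgt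
      · refine le_trans ?_ (le_max_left _ _)
        calc ‖PowerSeries.coeff (R := ℤ_[p]) n f‖ * ‖x‖ ^ n
            ≤ ((p:ℝ))⁻¹ ^ (m + 1) * 1 := by
              refine mul_le_mul (hFlt n hlt) (pow_le_one₀ (norm_nonneg _) hx1.le)
                (by positivity) (by positivity)
          _ = ((p:ℝ))⁻¹ ^ (m + 1) := mul_one _
      · refine le_trans ?_ (le_max_right _ _)
        refine mul_le_mul (hFall n) ?_ (by positivity) (by positivity)
        exact pow_le_pow_of_le_one (norm_nonneg _) hx1.le (by omega)
  have haN : ‖a N‖ = ((p:ℝ))⁻¹ ^ m * ‖x‖ ^ N := by rw [hna N, hFN]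
  have hClt : C < ‖a N‖ := by
    rw [haN, hC_def]
    refine max_lt ?_ ?_
    · calc ((p:ℝ))⁻¹ ^ (m + 1) = ((p:ℝ))⁻¹ ^ m * ((p:ℝ))⁻¹ := pow_succ _ _
        _ < ((p:ℝ))⁻¹ ^ m * ‖x‖ ^ N := by
            refine mul_lt_mul_of_pos_left hxN (by positivity)
    · refine mul_lt_mul_of_pos_left ?_ (by positivity)
      exact pow_lt_pow_right_of_lt_one₀ hxpos hx1 (Nat.lt_succ_self N)
  -- conclude
  rw [hζ0] at hEval
  have haNeq : a N = - ∑' n, if n = N then 0 else a n := by linear_combination -hEval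
  have : ‖a N‖ ≤ C := by rw [haNeq, norm_neg]; exact hrest
  linarith
end

section
/- Let R be a commutative Noetherian local ring with maximal ideal m_R which is m_R-adically complete. Let P, Q ∈ R[X] be distinguished polynomials, i.e. monic polynomials all of whose coefficients of degree strictly less than the degree lie in m_R. If P and Q generate the same ideal of the power series ring R[[X]], then P = Q. -/
open IsLocalRing

/-- Uniqueness of distinguished polynomials generating a given ideal of `R[[X]]` for `R` a
complete Noetherian local ring: if `P` and `Q` are distinguished polynomials (monic with all
lower coefficients in the maximal ideal) generating the same ideal of `R[[X]]`, then `P = Q`. -/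
theorem stmt_9 (R : Type*) [CommRing R] [IsNoetherianRing R] [IsLocalRing R]
    [IsAdicComplete (maximalIdeal R) R]
    (P Q : Polynomial R)
    (hPmonic : P.Monic) (hPdist : ∀ i < P.natDegree, P.coeff i ∈ maximalIdeal R)
    (hQmonic : Q.Monic) (hQdist : ∀ i < Q.natDegree, Q.coeff i ∈ maximalIdeal R)
    (h : Ideal.span {(P : PowerSeries R)} = Ideal.span {(Q : PowerSeries R)}) :
    P = Q := by
  -- extract divisibility both ways
  have hPQ : (Q : PowerSeries R) ∣ (P : PowerSeries R) := by
    rw [← Ideal.mem_span_singleton, ← h]; exact Ideal.mem_span_singleton_self _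
  have hQP : (P : PowerSeries R) ∣ (Q : PowerSeries R) := by
    rw [← Ideal.mem_span_singleton, h]; exact Ideal.mem_span_singleton_self _
  obtain ⟨a, ha⟩ := hPQ
  obtain ⟨b, hb⟩ := hQP
  -- degrees are equal
  have key : ∀ (A B : Polynomial R) (c : PowerSeries R), A.Monic →
      (∀ i < B.natDegree, B.coeff i ∈ maximalIdeal R) →
      (A : PowerSeries R) = (B : PowerSeries R) * c → B.natDegree ≤ A.natDegree := by
    intro A B c hA hB hac
    by_contra hlt
    push_neg at hlt
    have h1 : (1 : R) ∈ maximalIdeal R := by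
      have := congrArg (PowerSeries.coeff (R := R) A.natDegree) hac
      rw [Polynomial.coeff_coe, hA.coeff_natDegree, PowerSeries.coeff_mul] at this
      rw [this]
      apply Ideal.sum_mem
      rintro ⟨i, j⟩ hij
      rw [Finset.HasAntidiagonal.mem_antidiagonal] at hij
      exact Ideal.mul_mem_right _ _ (by
        rw [Polynomial.coeff_coe]
        exact hB i (lt_of_le_of_lt (hij ▸ Nat.le_add_right _ _) hlt))
    exact (Ideal.ne_top_iff_one _).mp (Ideal.IsMaximal.ne_top inferInstance) h1
  have hdeg : P.natDegree = Q.natDegree :=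
    le_antisymm (key Q P b hQmonic hPdist hb) (key P Q a hPmonic hQdist ha)
  set n := Q.natDegree with hn
  -- the correction series
  set f : PowerSeries R := a - 1 with hf
  set q : Polynomial R := Q - Polynomial.X ^ n with hq
  have hqmem : ∀ i, q.coeff i ∈ maximalIdeal R := by
    intro i
    rw [hq, Polynomial.coeff_sub, Polynomial.coeff_X_pow]
    rcases lt_trichotomy i n with hi | hi | hi
    · rw [if_neg hi.ne, sub_zero]; exact hQdist i hi
    · rw [if_pos hi, hi, hQmonic.coeff_natDegree, sub_self]; exact zero_mem _
    · rw [if_neg hi.ne', sub_zero, Polynomial.coeff_eq_zero_of_natDegree_lt hi]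
      exact zero_mem _
  -- basic relation: X^n * f = (P - Q) - q * f
  have hrel : (PowerSeries.X : PowerSeries R) ^ n * f
      = ((P : PowerSeries R) - Q) - (q : PowerSeries R) * f := by
    have hQX : (Q : PowerSeries R) = (q : PowerSeries R) + PowerSeries.X ^ n := by
      rw [hq, Polynomial.coe_sub, Polynomial.coe_pow, Polynomial.coe_X, sub_add_cancel]
    calc (PowerSeries.X : PowerSeries R) ^ n * f
        = (Q : PowerSeries R) * f - (q : PowerSeries R) * f := by
          rw [hQX]; ring
      _ = ((P : PowerSeries R) - Q) - (q : PowerSeries R) * f := by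
          rw [hf, mul_sub, mul_one, ← ha]
  -- high coefficients of P - Q vanish
  have hPQcoeff : ∀ k : ℕ, PowerSeries.coeff (R := R) (k + n) ((P : PowerSeries R) - Q) = 0 := by
    intro k
    rw [map_sub, Polynomial.coeff_coe, Polynomial.coeff_coe]
    rcases Nat.eq_zero_or_pos k with rfl | hk
    · have h1 : P.coeff n = 1 := hdeg ▸ hPmonic.coeff_natDegree
      have h2 : Q.coeff n = 1 := hQmonic.coeff_natDegree
      rw [zero_add, h1, h2, sub_self]
    · rw [Polynomial.coeff_eq_zero_of_natDegree_lt (by omega : P.natDegree < k + n),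
        Polynomial.coeff_eq_zero_of_natDegree_lt (by omega : Q.natDegree < k + n), sub_zero]
  -- successive approximation: all coefficients of f lie in every power of the maximal ideal
  have hind : ∀ j : ℕ, ∀ k : ℕ, PowerSeries.coeff (R := R) k f ∈ (maximalIdeal R) ^ j := by
    intro j
    induction j with
    | zero => intro k; simp
    | succ j ih =>
      intro k
      have := congrArg (PowerSeries.coeff (R := R) (k + n)) hrel
      rw [PowerSeries.coeff_X_pow_mul,
        show (PowerSeries.coeff (R := R) (k + n)) ((P : PowerSeries R) - ↑Q - ↑q * f)
          = 0 - (PowerSeries.coeff (R := R) (k + n)) ((q : PowerSeries R) * f) by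
            rw [map_sub, hPQcoeff k], zero_sub] at this
      rw [this]
      apply neg_mem
      rw [PowerSeries.coeff_mul]
      apply Ideal.sum_mem
      rintro ⟨i, l⟩ hil
      rw [pow_succ']
      apply Ideal.mul_mem_mul
      · rw [Polynomial.coeff_coe]; exact hqmem i
      · exact ih l
  -- Hausdorffness: f = 0
  have hf0 : f = 0 := by
    ext k
    refine IsHausdorff.haus (inferInstance : IsHausdorff (maximalIdeal R) R) _ fun j => ?_
    rw [SModEq.zero, smul_eq_mul, Ideal.mul_top]
    exact hind j k
  have hfin : (P : PowerSeries R) = (Q : PowerSeries R) := by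
    rw [ha, show a = f + 1 by rw [hf]; ring, hf0]; ring
  exact_mod_cast hfin
end

section
/- Let N ≥ 1 and k be integers, and let f be a cusp form of weight k for the congruence subgroup Γ₀(N), with q-expansion f(z) = ∑_{n≥1} a_n e^{2πinz} for z in the upper half-plane. Let j ≥ 0 be an integer such that ∑_{n≥1} |a_n|·n^{−(j+1)} < ∞. Then the function y ↦ f(iy)·y^j is integrable on (0,∞) and ∫_0^∞ f(iy)·y^j dy = (j! / (2π)^{j+1}) · ∑_{n≥1} a_n·n^{−(j+1)}; that is, the period integral ∫_0^∞ f(iy) y^j dy equals j!/(2π)^{j+1} times the value L(f, j+1) of the L-series of f. -/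
open Complex MeasureTheory CongruenceSubgroup

lemma stmt12_cint (j : ℕ) (n : ℕ) (hn : 1 ≤ n) :
    ∫ y in Set.Ioi (0:ℝ), (y:ℂ) ^ j * Complex.exp (((-(2 * Real.pi * n * y) : ℝ) : ℂ)) =
      ((j.factorial : ℂ) / (2 * Real.pi) ^ (j + 1)) * (1 / (n : ℂ) ^ (j + 1)) := by
  have hr : 0 < 2 * Real.pi * n := by positivity
  have h := Complex.integral_cpow_mul_exp_neg_mul_Ioi
    (a := ((j : ℂ) + 1)) (r := 2 * Real.pi * n) (by simp; positivity) hr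
  rw [show ((j:ℂ) + 1 - 1) = (j:ℂ) by ring] at h
  simp_rw [Complex.cpow_natCast] at h
  rw [show ((j:ℂ)+1) = ((j+1 : ℕ) : ℂ) by push_cast; ring, Complex.cpow_natCast,
    show ((j+1:ℕ):ℂ) = (j:ℂ)+1 by push_cast; ring, Complex.Gamma_nat_eq_factorial] at h
  have h2 : ∀ y : ℝ, Complex.exp (((-(2 * Real.pi * n * y) : ℝ)) : ℂ)
      = Complex.exp (-((((2 * Real.pi * n : ℝ)) : ℂ) * (y : ℂ))) := by
    intro y; congr 1; push_cast; ring
  simp only [h2]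
  rw [h]
  have hn0 : (n:ℂ) ≠ 0 := Nat.cast_ne_zero.mpr (by omega)
  have hpi : (Real.pi : ℂ) ≠ 0 := by exact_mod_cast Real.pi_ne_zero
  push_cast
  rw [div_pow, one_pow, show ((2:ℂ) * Real.pi * n) = (2*Real.pi) * n by ring, mul_pow]
  field_simp

lemma stmt12_rint (j : ℕ) (n : ℕ) (hn : 1 ≤ n) :
    ∫ y in Set.Ioi (0:ℝ), y ^ j * Real.exp (-(2 * Real.pi * n * y)) =
      ((j.factorial : ℝ) / (2 * Real.pi) ^ (j + 1)) * (1 / (n : ℝ) ^ (j + 1)) := by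
  have hr : 0 < 2 * Real.pi * n := by positivity
  have h := Real.integral_rpow_mul_exp_neg_mul_Ioi
    (a := ((j : ℝ) + 1)) (r := 2 * Real.pi * n) (by positivity) hr
  rw [show ((j:ℝ) + 1 - 1) = (j:ℝ) by ring] at h
  simp_rw [Real.rpow_natCast] at h
  rw [show ((j:ℝ)+1) = ((j+1 : ℕ) : ℝ) by push_cast; ring, Real.rpow_natCast,
    show ((j+1:ℕ):ℝ) = (j:ℝ)+1 by push_cast; ring, Real.Gamma_nat_eq_factorial] at h
  simp_rw [show ∀ y : ℝ, -(2 * Real.pi * n * y) = -(2 * Real.pi * n) * y by intro y; ring] at *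
  rw [h]
  have hn0 : (n:ℝ) ≠ 0 := Nat.cast_ne_zero.mpr (by omega)
  rw [div_pow, one_pow, show ((2:ℝ) * Real.pi * n) = (2*Real.pi) * n by ring, mul_pow]
  field_simp

/-- The period integral of a cusp form `f` of weight `k` for `Γ₀(N)` with q-expansion
`f(z) = ∑_{n≥1} a_n e^{2πinz}`: for `j ≥ 0` with `∑_{n≥1} |a_n| n^{-(j+1)} < ∞`, the
function `y ↦ f(iy)·y^j` is integrable on `(0,∞)` and
`∫_0^∞ f(iy) y^j dy = (j!/(2π)^{j+1}) · L(f, j+1)`. -/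
theorem stmt_12 (N : ℕ) (hN : 1 ≤ N) (k : ℤ) (f : CuspForm (Gamma0 N) k)
    (a : ℕ → ℂ) (ha0 : a 0 = 0)
    (hqexp : ∀ z : UpperHalfPlane,
      f z = ∑' n : ℕ, a n * Complex.exp (2 * Real.pi * I * (n : ℂ) * (z : ℂ)))
    (j : ℕ) (hsum : Summable (fun n : ℕ => ‖a n‖ / (n : ℝ) ^ (j + 1))) :
    IntegrableOn (fun y : ℝ =>
        if hy : 0 < y then f (⟨Complex.I * (y : ℂ), by simpa using hy⟩ : UpperHalfPlane) *
          (y : ℂ) ^ j else 0) (Set.Ioi 0) ∧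
    (∫ y in Set.Ioi (0 : ℝ),
        if hy : 0 < y then f (⟨Complex.I * (y : ℂ), by simpa using hy⟩ : UpperHalfPlane) *
          (y : ℂ) ^ j else 0) =
      ((j.factorial : ℂ) / (2 * Real.pi) ^ (j + 1)) * ∑' n : ℕ, a n / (n : ℂ) ^ (j + 1) := by
  set F : ℝ → ℂ := fun y : ℝ =>
      if hy : 0 < y then f (⟨Complex.I * (y : ℂ), by simpa using hy⟩ : UpperHalfPlane) *
        (y : ℂ) ^ j else 0 with hF
  set g : ℕ → ℝ → ℂ := fun n y =>
      (a n * Complex.exp (((-(2 * Real.pi * n * y) : ℝ) : ℂ))) * (y:ℂ) ^ j with hg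
  -- pointwise identity on Ioi 0
  have hpt : ∀ y ∈ Set.Ioi (0:ℝ), F y = ∑' n : ℕ, g n y := by
    intro y hy
    rw [Set.mem_Ioi] at hy
    rw [hF]
    simp only [dif_pos hy]
    rw [hqexp, ← tsum_mul_right]
    refine tsum_congr fun n => ?_
    rw [hg]
    congr 2
    congr 1
    show 2 * (Real.pi:ℂ) * I * (n:ℂ) * (Complex.I * (y:ℂ)) = _
    push_cast
    rw [show (2 * (Real.pi:ℂ) * I * n * (I * y)) = (I*I) * (2 * Real.pi * n * y) by ring,
      Complex.I_mul_I]
    ring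
  -- g expressed via a real function
  have hg_eq : ∀ n : ℕ, g n = fun y : ℝ =>
      a n * ((y ^ j * Real.exp (-(2 * Real.pi * n * y)) : ℝ) : ℂ) := by
    intro n
    funext y
    rw [hg, Complex.ofReal_mul, Complex.ofReal_exp, Complex.ofReal_pow]
    ring
  -- integrability of each g n
  have hint : ∀ n : ℕ, IntegrableOn (g n) (Set.Ioi 0) := by
    intro n
    rcases Nat.eq_zero_or_pos n with h | h
    · subst h
      simp only [hg, ha0, zero_mul]
      simp
    · have hr : 0 < 2 * Real.pi * n := by positivity
      have hI : IntegrableOn (fun y : ℝ => y ^ ((j:ℝ)) * Real.exp (-(2 * Real.pi * n) * y ^ (1:ℝ)))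
          (Set.Ioi 0) :=
        integrableOn_rpow_mul_exp_neg_mul_rpow
          (lt_of_lt_of_le (by norm_num) (Nat.cast_nonneg j)) one_pos hr
      simp_rw [Real.rpow_natCast, Real.rpow_one] at hI
      rw [hg_eq n]
      have heq : (fun y : ℝ => a n * ((y ^ j * Real.exp (-(2 * Real.pi * n * y)) : ℝ) : ℂ)) =
          (fun y : ℝ => a n * ((y ^ j * Real.exp (-(2 * Real.pi * n) * y) : ℝ) : ℂ)) := by
        funext y; ring_nf
      rw [heq]
      exact hI.ofReal.const_mul (a n)
  -- value of each integral
  have hval : ∀ n : ℕ, ∫ y in Set.Ioi (0:ℝ), g n y =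
      ((j.factorial : ℂ) / (2 * Real.pi) ^ (j + 1)) * (a n / (n : ℂ) ^ (j + 1)) := by
    intro n
    rcases Nat.eq_zero_or_pos n with h | h
    · subst h
      simp only [hg, ha0, zero_mul]
      simp
    · have := stmt12_cint j n h
      calc ∫ y in Set.Ioi (0:ℝ), g n y
          = a n * ∫ y in Set.Ioi (0:ℝ), (y:ℂ) ^ j *
              Complex.exp (((-(2 * Real.pi * n * y) : ℝ) : ℂ)) := by
            rw [← integral_const_mul]
            refine setIntegral_congr_fun measurableSet_Ioi (fun y _ => ?_)
            rw [hg]; ring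
        _ = ((j.factorial : ℂ) / (2 * Real.pi) ^ (j + 1)) * (a n / (n : ℂ) ^ (j + 1)) := by
            rw [this]; ring
  -- norm integrals
  have hC : (0:ℝ) ≤ (j.factorial : ℝ) / (2 * Real.pi) ^ (j + 1) := by positivity
  have hlint : ∀ n : ℕ, (∫⁻ y in Set.Ioi (0:ℝ), ‖g n y‖₊) =
      ENNReal.ofReal (((j.factorial : ℝ) / (2 * Real.pi) ^ (j + 1)) * (‖a n‖ / (n:ℝ) ^ (j+1))) := by
    intro n
    change (∫⁻ y in Set.Ioi (0:ℝ), ‖g n y‖ₑ) = _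
    rw [← ofReal_integral_norm_eq_lintegral_enorm (hint n)]
    congr 1
    rcases Nat.eq_zero_or_pos n with h | h
    · subst h
      simp only [hg, ha0, zero_mul, norm_zero]
      simp
    · calc ∫ y in Set.Ioi (0:ℝ), ‖g n y‖
          = ‖a n‖ * ∫ y in Set.Ioi (0:ℝ), y ^ j * Real.exp (-(2 * Real.pi * n * y)) := by
            rw [← integral_const_mul]
            refine setIntegral_congr_fun measurableSet_Ioi (fun y hy => ?_)
            rw [Set.mem_Ioi] at hy
            rw [hg_eq n]
            simp only [norm_mul, Complex.norm_real, Real.norm_eq_abs]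
            rw [_root_.abs_of_nonneg (pow_nonneg hy.le j), _root_.abs_of_nonneg (Real.exp_pos _).le]
        _ = _ := by
            rw [stmt12_rint j n h]; ring
  have hsumC : Summable (fun n : ℕ =>
      ((j.factorial : ℝ) / (2 * Real.pi) ^ (j + 1)) * (‖a n‖ / (n:ℝ) ^ (j+1))) :=
    hsum.mul_left _
  have hne : (∑' n : ℕ, ∫⁻ y in Set.Ioi (0:ℝ), ‖g n y‖₊) ≠ ⊤ := by
    simp_rw [hlint]
    rw [← ENNReal.ofReal_tsum_of_nonneg (fun n => by positivity) hsumC]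
    exact ENNReal.ofReal_ne_top
  -- integrability of F
  have hFmeas : AEStronglyMeasurable F (volume.restrict (Set.Ioi (0:ℝ))) := by
    refine ContinuousOn.aestronglyMeasurable ?_ measurableSet_Ioi
    rw [continuousOn_iff_continuous_restrict]
    have hres : (Set.Ioi (0:ℝ)).domRestrict F = fun y : Set.Ioi (0:ℝ) =>
        f (⟨Complex.I * ((y:ℝ) : ℂ), by simpa using Set.mem_Ioi.mp y.2⟩ : UpperHalfPlane) * ((y:ℝ) : ℂ) ^ j := by
      funext y
      simp only [Set.domRestrict_apply, hF, dif_pos (Set.mem_Ioi.mp y.2)]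
    rw [hres]
    refine Continuous.mul ?_ (by fun_prop)
    refine f.holo'.continuous.comp ?_
    refine Continuous.upperHalfPlaneMk ?_ _
    fun_prop
  have hFfin : HasFiniteIntegral F (volume.restrict (Set.Ioi (0:ℝ))) := by
    rw [hasFiniteIntegral_congr ((ae_restrict_iff' measurableSet_Ioi).mpr
      (Filter.Eventually.of_forall hpt))]
    rw [HasFiniteIntegral]
    calc ∫⁻ y in Set.Ioi (0:ℝ), ‖∑' n : ℕ, g n y‖₊
        ≤ ∫⁻ y in Set.Ioi (0:ℝ), ∑' n : ℕ, (‖g n y‖₊ : ENNReal) := by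
          refine lintegral_mono (fun y => ?_)
          by_cases hS : Summable (fun n : ℕ => ‖g n y‖₊)
          · calc ((‖∑' n : ℕ, g n y‖₊ : ENNReal))
                ≤ ((∑' n : ℕ, ‖g n y‖₊ : NNReal) : ENNReal) :=
                  ENNReal.coe_le_coe.mpr (nnnorm_tsum_le hS)
              _ = ∑' n : ℕ, (‖g n y‖₊ : ENNReal) := ENNReal.coe_tsum hS
          · have htop : (∑' n : ℕ, (‖g n y‖₊ : ENNReal)) = ⊤ := by
              by_contra hft
              exact hS (ENNReal.tsum_coe_ne_top_iff_summable.mp hft)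
            rw [htop]; exact le_top
      _ = ∑' n : ℕ, ∫⁻ y in Set.Ioi (0:ℝ), ‖g n y‖₊ :=
          lintegral_tsum (fun n => (hint n).aestronglyMeasurable.enorm)
      _ < ⊤ := lt_top_iff_ne_top.mpr hne
  refine ⟨⟨hFmeas, hFfin⟩, ?_⟩
  rw [setIntegral_congr_fun measurableSet_Ioi hpt,
    integral_tsum (fun n => (hint n).aestronglyMeasurable) hne]
  simp_rw [hval]
  rw [tsum_mul_left]
end
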